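/- Lemma S8 (covariance representation of the difference between adjusted and unadjusted estimators). Let 𝒢 ⊆ 𝓕 be a sub-σ-algebra (e.g. the σ-algebra generated by the instrument Z), let Π := E[1_{A=1} | 𝒢], and for a = 0,1 let μ_a be a 𝒢-measurable integrable random variable with μ_a·E[1_{A=a} | 𝒢] = E[Y·1_{A=a} | 𝒢] almost surely and Π·μ_a integrable. Then, with cov(X, W) := E[X·W] − E[X]·E[W]: (i) (E(Y | A=1) − E(μ_0 | A=1)) − ACE_unadj = − cov(Π, μ_0)/(f·(1−f)); (ii) (E(μ_1 | A=0) − E(Y | A=0)) − ACE_unadj = − cov(Π, μ_1)/(f·(1−f)); (iii) (E[μ_1] − E[μ_0]) − ACE_unadj = − cov(Π, μ_0)/(1−f) − cov(Π, μ_1)/f. -/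

import Mathlib

open MeasureTheory ProbabilityTheory Set

/-- Conditional expectation of `W` given the event `E`: `E(W | E) = E[W·1_E]/P(E)`. -/
noncomputable def cE {Ω : Type*} [MeasurableSpace Ω] (P : Measure Ω) (W : Ω → ℝ) (E : Set Ω) : ℝ :=
  (∫ ω in E, W ω ∂P) / (P E).toReal

/-- The indicator `1_{A = a}` as a real-valued function. -/
noncomputable def indic {Ω : Type*} (A : Ω → ℝ) (a : ℝ) : Ω → ℝ :=
  Set.indicator {ω | A ω = a} (fun _ => (1 : ℝ))

section Aux
/-- Auxiliary: integral of an indicator-restricted function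
(measurable space explicit to avoid instance ambiguity). -/
lemma aux_int_indicator {Ω : Type*} (m : MeasurableSpace Ω) (P : Measure Ω) (W : Ω → ℝ)
    {s : Set Ω} (hs : MeasurableSet s) :
    ∫ ω, s.indicator W ω ∂P = ∫ ω in s, W ω ∂P := integral_indicator hs

/-- Auxiliary: integrability of an indicator-restricted function. -/
lemma aux_integrable_indicator {Ω : Type*} (m : MeasurableSpace Ω) (P : Measure Ω) {W : Ω → ℝ}
    (hW : Integrable W P) {s : Set Ω} (hs : MeasurableSet s) :
    Integrable (s.indicator W) P := hW.indicator hs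

/-- Auxiliary: the constant-one indicator of a measurable set is integrable with
integral `(P s).toReal`. -/
lemma aux_indicator_one {Ω : Type*} (m : MeasurableSpace Ω) (P : Measure Ω) [IsFiniteMeasure P]
    {s : Set Ω} (hs : MeasurableSet s) :
    Integrable (s.indicator fun _ => (1 : ℝ)) P ∧
      ∫ ω, s.indicator (fun _ => (1 : ℝ)) ω ∂P = (P s).toReal := by
  refine ⟨(integrable_const 1).indicator hs, ?_⟩
  rw [integral_indicator_const _ hs]; simp; rfl
end Aux

/-- Lemma S8: covariance representation of the difference between the adjusted
and unadjusted estimators. -/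
theorem adjusted_minus_unadjusted_covariance
    {Ω : Type*} [m0 : MeasurableSpace Ω] (P : Measure Ω) [IsProbabilityMeasure P]
    (A Y : Ω → ℝ)
    (hAmeas : Measurable A) (hAbin : ∀ ω, A ω = 0 ∨ A ω = 1)
    (hYint : Integrable Y P)
    (f : ℝ) (hf : f = (P {ω | A ω = 1}).toReal) (hf0 : 0 < f) (hf1 : f < 1)
    (𝓖 : MeasurableSpace Ω) (h𝓖 : 𝓖 ≤ m0)
    (Pi : Ω → ℝ) (hPi : Pi = P[indic A 1 | 𝓖])
    (μ1 μ0 : Ω → ℝ)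
    (hμ1Meas : Measurable[𝓖] μ1) (hμ0Meas : Measurable[𝓖] μ0)
    (hμ1Int : Integrable μ1 P) (hμ0Int : Integrable μ0 P)
    (hμ1Ver : ∀ᵐ ω ∂P, μ1 ω * (P[indic A 1 | 𝓖]) ω = (P[fun ω' => Y ω' * indic A 1 ω' | 𝓖]) ω)
    (hμ0Ver : ∀ᵐ ω ∂P, μ0 ω * (P[indic A 0 | 𝓖]) ω = (P[fun ω' => Y ω' * indic A 0 ω' | 𝓖]) ω)
    (hPiμ1Int : Integrable (fun ω => Pi ω * μ1 ω) P)
    (hPiμ0Int : Integrable (fun ω => Pi ω * μ0 ω) P) :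
    -- (i)
    ((@cE Ω m0 P Y {ω | A ω = 1} - @cE Ω m0 P μ0 {ω | A ω = 1})
        - (@cE Ω m0 P Y {ω | A ω = 1} - @cE Ω m0 P Y {ω | A ω = 0})
      = -(((∫ ω, Pi ω * μ0 ω ∂P) - (∫ ω, Pi ω ∂P) * (∫ ω, μ0 ω ∂P)) / (f * (1 - f)))) ∧
    -- (ii)
    ((@cE Ω m0 P μ1 {ω | A ω = 0} - @cE Ω m0 P Y {ω | A ω = 0})
        - (@cE Ω m0 P Y {ω | A ω = 1} - @cE Ω m0 P Y {ω | A ω = 0})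
      = -(((∫ ω, Pi ω * μ1 ω ∂P) - (∫ ω, Pi ω ∂P) * (∫ ω, μ1 ω ∂P)) / (f * (1 - f)))) ∧
    -- (iii)
    (((∫ ω, μ1 ω ∂P) - (∫ ω, μ0 ω ∂P))
        - (@cE Ω m0 P Y {ω | A ω = 1} - @cE Ω m0 P Y {ω | A ω = 0})
      = -(((∫ ω, Pi ω * μ0 ω ∂P) - (∫ ω, Pi ω ∂P) * (∫ ω, μ0 ω ∂P)) / (1 - f))
        - ((∫ ω, Pi ω * μ1 ω ∂P) - (∫ ω, Pi ω ∂P) * (∫ ω, μ1 ω ∂P)) / f) := by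
  have hs1m : MeasurableSet[m0] {ω | A ω = 1} := hAmeas (measurableSet_singleton 1)
  have hs0m : MeasurableSet[m0] {ω | A ω = 0} := hAmeas (measurableSet_singleton 0)
  have hcompl : {ω | A ω = 0} = {ω | A ω = 1}ᶜ := by
    ext ω
    rcases hAbin ω with h | h <;> simp [h]
  have hP0 : (P {ω | A ω = 0}).toReal = 1 - f := by
    rw [hcompl, measure_compl hs1m (measure_ne_top P _), measure_univ,
      ENNReal.toReal_sub_of_le prob_le_one ENNReal.one_ne_top, ENNReal.toReal_one, hf]
  -- indicator rewriting
  have hind1 : ∀ W : Ω → ℝ, (fun ω => W ω * indic A 1 ω) = ({ω | A ω = 1}).indicator W := by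
    intro W; funext ω
    by_cases h : ω ∈ {ω | A ω = 1} <;> simp [indic, Set.indicator_apply, h]
  have hind0 : ∀ W : Ω → ℝ, (fun ω => W ω * indic A 0 ω) = ({ω | A ω = 0}).indicator W := by
    intro W; funext ω
    by_cases h : ω ∈ {ω | A ω = 0} <;> simp [indic, Set.indicator_apply, h]
  have hind1' : ∀ W : Ω → ℝ, W * indic A 1 = ({ω | A ω = 1}).indicator W := hind1
  have hind0' : ∀ W : Ω → ℝ, W * indic A 0 = ({ω | A ω = 0}).indicator W := hind0
  have hind01 : indic A 0 = fun ω => 1 - indic A 1 ω := by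
    funext ω
    rcases hAbin ω with h | h <;>
      simp [indic, Set.indicator_apply, h]
  have hindint1 : Integrable (indic A 1) P := (aux_indicator_one m0 P hs1m).1
  have hindint0 : Integrable (indic A 0) P := (aux_indicator_one m0 P hs0m).1
  have hμ0ind1int : Integrable (μ0 * indic A 1) P := by
    rw [hind1']; exact aux_integrable_indicator m0 P hμ0Int hs1m
  have hμ1ind0int : Integrable (μ1 * indic A 0) P := by
    rw [hind0']; exact aux_integrable_indicator m0 P hμ1Int hs0m
  -- strong measurability
  have hsm0 : StronglyMeasurable[𝓖] μ0 := hμ0Meas.stronglyMeasurable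
  have hsm1 : StronglyMeasurable[𝓖] μ1 := hμ1Meas.stronglyMeasurable
  -- E[Pi] = f
  have hEPi : ∫ ω, Pi ω ∂P = f := by
    rw [hPi, integral_condExp h𝓖]
    have h : ∫ ω, indic A 1 ω ∂P = ∫ ω, ({ω | A ω = 1}).indicator (fun _ => (1:ℝ)) ω ∂P := rfl
    rw [h, (aux_indicator_one m0 P hs1m).2, hf]
  -- condexp of indic A 0 is 1 - Pi
  have hcond0 : (P[indic A 0 | 𝓖]) =ᵐ[P] fun ω => 1 - Pi ω := by
    rw [hind01]
    have h1 : (fun ω : Ω => 1 - indic A 1 ω) = (fun _ : Ω => (1:ℝ)) - indic A 1 := rfl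
    rw [h1]
    filter_upwards [condExp_sub (integrable_const 1) hindint1 𝓖] with ω h
    rw [h]
    simp only [_root_.Pi.sub_apply]
    rw [condExp_const h𝓖, hPi]
  -- key integral identities
  have hI1 : ∫ ω, Pi ω * μ1 ω ∂P = ∫ ω in {ω | A ω = 1}, Y ω ∂P := by
    have e1 : ∫ ω, Pi ω * μ1 ω ∂P = ∫ ω, μ1 ω * Pi ω ∂P := by
      simp_rw [mul_comm]
    rw [e1, integral_congr_ae (hPi ▸ hμ1Ver), integral_condExp h𝓖, hind1,
      aux_int_indicator m0 P Y hs1m]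
  have hI0 : (∫ ω, μ0 ω ∂P) - (∫ ω, Pi ω * μ0 ω ∂P) = ∫ ω in {ω | A ω = 0}, Y ω ∂P := by
    have e1 : (∫ ω, μ0 ω ∂P) - (∫ ω, Pi ω * μ0 ω ∂P)
        = ∫ ω, (μ0 ω - Pi ω * μ0 ω) ∂P := (integral_sub hμ0Int hPiμ0Int).symm
    have e2 : ∀ᵐ ω ∂P, μ0 ω - Pi ω * μ0 ω = (P[fun ω' => Y ω' * indic A 0 ω' | 𝓖]) ω := by
      filter_upwards [hμ0Ver, hcond0] with ω h1 h2
      rw [← h1, h2]; ring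
    rw [e1, integral_congr_ae e2, integral_condExp h𝓖, hind0, aux_int_indicator m0 P Y hs0m]
  have hC0 : ∫ ω in {ω | A ω = 1}, μ0 ω ∂P = ∫ ω, Pi ω * μ0 ω ∂P := by
    have hpull : (P[μ0 * indic A 1 | 𝓖]) =ᵐ[P] fun ω => μ0 ω * Pi ω := by
      filter_upwards [condExp_mul_of_stronglyMeasurable_left hsm0 hμ0ind1int hindint1] with ω h
      rw [h]
      simp only [_root_.Pi.mul_apply]
      rw [hPi]
    calc ∫ ω in {ω | A ω = 1}, μ0 ω ∂P
        = ∫ ω, (μ0 * indic A 1) ω ∂P := by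
          rw [hind1']; exact (aux_int_indicator m0 P μ0 hs1m).symm
      _ = ∫ ω, (P[μ0 * indic A 1 | 𝓖]) ω ∂P := (integral_condExp h𝓖).symm
      _ = ∫ ω, μ0 ω * Pi ω ∂P := integral_congr_ae hpull
      _ = ∫ ω, Pi ω * μ0 ω ∂P := by simp_rw [mul_comm]
  have hC1 : ∫ ω in {ω | A ω = 0}, μ1 ω ∂P
      = (∫ ω, μ1 ω ∂P) - ∫ ω, Pi ω * μ1 ω ∂P := by
    have hpull : (P[μ1 * indic A 0 | 𝓖]) =ᵐ[P] fun ω => μ1 ω * (1 - Pi ω) := by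
      filter_upwards [condExp_mul_of_stronglyMeasurable_left hsm1 hμ1ind0int hindint0,
        hcond0] with ω h h2
      rw [h]
      simp only [_root_.Pi.mul_apply]
      rw [h2]
    calc ∫ ω in {ω | A ω = 0}, μ1 ω ∂P
        = ∫ ω, (μ1 * indic A 0) ω ∂P := by
          rw [hind0']; exact (aux_int_indicator m0 P μ1 hs0m).symm
      _ = ∫ ω, (P[μ1 * indic A 0 | 𝓖]) ω ∂P := (integral_condExp h𝓖).symm
      _ = ∫ ω, μ1 ω * (1 - Pi ω) ∂P := integral_congr_ae hpull
      _ = ∫ ω, (μ1 ω - Pi ω * μ1 ω) ∂P := by congr 1; funext ω; ring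
      _ = (∫ ω, μ1 ω ∂P) - ∫ ω, Pi ω * μ1 ω ∂P := integral_sub hμ1Int hPiμ1Int
  -- now pure algebra
  have hfne : f ≠ 0 := ne_of_gt hf0
  have h1fne : (1 : ℝ) - f ≠ 0 := by linarith
  simp only [cE, hP0, ← hf, hC0, hC1, hEPi]
  set c0 := ∫ ω, Pi ω * μ0 ω ∂P
  set c1 := ∫ ω, Pi ω * μ1 ω ∂P
  set n0 := ∫ ω, μ0 ω ∂P
  set n1 := ∫ ω, μ1 ω ∂P
  have ha1 : ∫ ω in {ω | A ω = 1}, Y ω ∂P = c1 := hI1.symm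
  have ha0 : ∫ ω in {ω | A ω = 0}, Y ω ∂P = n0 - c0 := hI0.symm
  rw [ha1, ha0]
  refine ⟨by field_simp; ring, by field_simp; ring, by field_simp; ring⟩
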